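/- Let κ be an infinite cardinal, X a set, and (x_α)_{α<κ} an injective transfinite sequence in X. Let φ_0 be the filter on X generated by the sets {x_0}∪{x_β : α<β<κ} for α<κ. Then for every infinite cardinal λ ≤ cf(κ), the set of filters φ on X with φ ⊇ φ_0, ⋂φ = {x_0}, and ψ(φ) = λ has cardinality exactly 2^(2^κ). -/

import Mathlib

open Cardinal Set Filter Ordinal

universe u

set_option linter.unusedSectionVars false

namespace CardFiltersPseudo

instance instWOtoType (o : Ordinal.{u}) : IsWellOrder o.ToType (· < ·) := isWellOrder_lt

theorem exists_dec_of_pred {Λ : Type u} (T : Λ → Ordinal.{u} → Prop)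
    (hdisj : ∀ l l' o, T l o → T l' o → l = l') :
    ∃ Dec : Ordinal.{u} → Option Λ,
      (∀ l o, T l o → Dec o = some l) ∧ (∀ l o, Dec o = some l → T l o) := by
  classical
  refine ⟨fun o => if h : ∃ l, T l o then some h.choose else none, fun l o hT => ?_, fun l o h => ?_⟩
  · show (if h : ∃ l, T l o then some h.choose else none) = some l
    rw [dif_pos ⟨l, hT⟩]
    exact congrArg some (hdisj _ _ _ (Exists.choose_spec (⟨l, hT⟩ : ∃ l, T l o)) hT)
  · replace h : (if h : ∃ l, T l o then some h.choose else none) = some l := h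
    by_cases he : ∃ l, T l o
    · rw [dif_pos he] at h
      obtain rfl : he.choose = l := by injection h
      exact he.choose_spec
    · rw [dif_neg he] at h; exact absurd h (by simp)


theorem opow_add_lt {a e c : Ordinal} (hc : c < ω ^ a) (hae : a < e) :
    ω ^ a + c < ω ^ e := by
  have h2 : ω ^ a + c < ω ^ a * 2 := by
    have h : ω ^ a * 2 = ω ^ a + ω ^ a := by
      have h21 : (2 : Ordinal) = Order.succ 1 := by norm_num
      rw [h21, Ordinal.mul_succ, mul_one]
    rw [h]
    exact add_lt_add_right hc _
  have h3 : ω ^ a * 2 ≤ ω ^ a * ω := by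
    apply mul_le_mul_right
    exact le_of_lt (by exact_mod_cast nat_lt_omega0 2)
  have h4 : ω ^ a * ω ≤ ω ^ e := by
    rw [← Ordinal.opow_succ]
    exact Ordinal.opow_le_opow_right omega0_pos (Order.succ_le_of_lt hae)
  exact lt_of_lt_of_le h2 (le_trans h3 h4)

theorem opow_add_eq_opow_add {a a' c c' : Ordinal} (hc : c < ω ^ a) (hc' : c' < ω ^ a')
    (h : ω ^ a + c = ω ^ a' + c') : a = a' ∧ c = c' := by
  have key : ∀ {b b' : Ordinal} {d d' : Ordinal}, d < ω ^ b → d' < ω ^ b' →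
      ω ^ b + d = ω ^ b' + d' → b < b' → False := by
    intro b b' d d' hd hd' he hbb
    have h1 : ω ^ b + d < ω ^ b' := opow_add_lt hd hbb
    rw [he] at h1
    exact absurd h1 (not_lt.2 (le_self_add))
  have haa : a = a' := by
    rcases lt_trichotomy a a' with hlt | heq | hgt
    · exact absurd (key hc hc' h hlt) id
    · exact heq
    · exact absurd (key hc' hc h.symm hgt) id
  subst haa
  exact ⟨rfl, (add_right_inj _).1 h⟩

theorem exists_codes (κ : Cardinal.{u}) (hκ : ℵ₀ ≤ κ) (Λ : Type u) (hΛ : #Λ ≤ κ) :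
    ∃ Dec : Ordinal.{u} → Option Λ,
      (∀ (l : Λ) (β : Ordinal.{u}), β < κ.ord →
        ∃ o, o < κ.ord ∧ Dec o = some l ∧ β < o ∧ 0 < o) ∧
      (∀ (l : Λ) (o : Ordinal.{u}), Dec o = some l → 0 < o) := by
  classical
  have hω : ω ≤ κ.ord := by rw [← ord_aleph0]; exact ord_le_ord.2 hκ
  by_cases hκa : κ = ℵ₀
  · -- countable case via Nat.pair
    subst hκa
    have hcnt : Countable Λ := mk_le_aleph0_iff.1 hΛ
    obtain ⟨c, hc⟩ := exists_injective_nat Λ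
    have hdisj : ∀ l l' o, (∃ t : ℕ, o = ((Nat.pair (c l) t + 1 : ℕ) : Ordinal)) →
        (∃ t : ℕ, o = ((Nat.pair (c l') t + 1 : ℕ) : Ordinal)) → l = l' := by
      rintro l l' o ⟨t, rfl⟩ ⟨t', het⟩
      have h2 : Nat.pair (c l) t + 1 = Nat.pair (c l') t' + 1 := by exact_mod_cast het
      have h3 : Nat.pair (c l) t = Nat.pair (c l') t' := by omega
      exact hc (Nat.pair_eq_pair.1 h3).1
    obtain ⟨Dec, hDec1, hDecT⟩ := exists_dec_of_pred _ hdisj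
    refine ⟨Dec, fun l β hβ => ?_, fun l o h => ?_⟩
    swap
    · obtain ⟨t, rfl⟩ := hDecT l o h
      exact_mod_cast Nat.succ_pos _
    rw [ord_aleph0] at hβ ⊢
    obtain ⟨n, rfl⟩ := lt_omega0.1 hβ
    refine ⟨((Nat.pair (c l) n + 1 : ℕ) : Ordinal), nat_lt_omega0 _, hDec1 l _ ⟨n, rfl⟩, ?_, ?_⟩
    · exact_mod_cast Nat.lt_succ_of_le (Nat.right_le_pair _ _)
    · exact_mod_cast Nat.succ_pos _
  · -- uncountable case
    have hκ' : ℵ₀ < κ := lt_of_le_of_ne hκ (Ne.symm hκa)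
    obtain ⟨e, he⟩ : ∃ e : Ordinal, κ.ord = ω ^ e := by
      rcases principal_add_iff_zero_or_omega0_opow.1 (principal_add_ord hκ) with h0 | h
      · rw [h0] at hω; exact absurd hω omega0_pos.not_ge
      · obtain ⟨e, he⟩ := h; exact ⟨e, he.symm⟩
    rcases zero_or_succ_or_isSuccLimit e with rfl | ⟨d, rfl⟩ | helim
    · rw [opow_zero] at he
      rw [he] at hω
      exact absurd hω (by simpa using (one_lt_omega0).not_ge)
    · -- successor: κ.ord = ω ^ d * ω
      have hbω : κ.ord = ω ^ d * ω := by rw [he, opow_succ]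
      set b := ω ^ d with hb
      have hb0 : b ≠ 0 := (opow_pos d omega0_pos).ne'
      have hbpos : 0 < b := opow_pos d omega0_pos
      have hcardb : κ = b.card := by
        have h1 : κ = b.card * ℵ₀ := by
          rw [← card_ord κ, hbω, card_mul, card_omega0]
        have hble : ℵ₀ ≤ b.card := by
          by_contra hfin
          push_neg at hfin
          have : b.card * ℵ₀ ≤ ℵ₀ * ℵ₀ := mul_le_mul' hfin.le le_rfl
          rw [mul_eq_self le_rfl] at this
          exact absurd (h1 ▸ this) hκ'.not_ge
        rw [h1, mul_eq_max hble le_rfl, max_eq_left hble]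
      obtain ⟨θ⟩ : Nonempty (Λ ↪ b.ToType) := by
        rw [← Cardinal.le_def, mk_toType, ← hcardb]
        exact hΛ
      set code : Λ → Ordinal.{u} := fun l => typein (α := b.ToType) (· < ·) (θ l) with hcode
      have hcodelt : ∀ l, code l < b := fun l => typein_lt_self (θ l)
      have hcodeinj : Function.Injective code :=
        fun l l' h => θ.injective (typein_injective _ h)
      have hdisj : ∀ l l' o, (∃ q, 0 < q ∧ q < ω ∧ o = b * q + code l) →
          (∃ q, 0 < q ∧ q < ω ∧ o = b * q + code l') → l = l' := by
        rintro l l' o ⟨q, hq0, hqω, rfl⟩ ⟨q', hq0', hqω', he'⟩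
        have hdiv : ∀ (q₀ : Ordinal) (l₀ : Λ), (b * q₀ + code l₀) / b = q₀ := by
          intro q₀ l₀
          rw [Ordinal.mul_add_div _ hb0, Ordinal.div_eq_zero_of_lt (hcodelt l₀), add_zero]
        have hq : q = q' := by
          have := congrArg (· / b) he'
          simpa [hdiv] using this
        subst hq
        exact hcodeinj ((add_right_inj _).1 he')
      obtain ⟨Dec, hDec1, hDecT⟩ := exists_dec_of_pred _ hdisj
      refine ⟨Dec, fun l β hβ => ?_, fun l o h => ?_⟩
      swap
      · obtain ⟨q, hq0, -, rfl⟩ := hDecT l o h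
        exact lt_of_lt_of_le (mul_pos hbpos hq0) (le_self_add)
      rw [hbω] at hβ
      obtain ⟨q, hqω, hβq⟩ := (lt_mul_iff_of_isSuccLimit isSuccLimit_omega0).1 hβ
      have hq0 : 0 < q := by
        rcases eq_zero_or_pos q with rfl | h
        · rw [mul_zero] at hβq; exact absurd hβq (not_lt_of_ge (zero_le (a := β)))
        · exact h
      refine ⟨b * q + code l, ?_, hDec1 l _ ⟨q, hq0, hqω, rfl⟩, ?_, ?_⟩
      · calc b * q + code l < b * q + b := add_lt_add_right (hcodelt l) _
          _ = b * Order.succ q := (Ordinal.mul_succ _ _).symm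
          _ ≤ b * ω := mul_le_mul_right (isSuccLimit_omega0.succ_lt hqω).le _
          _ = κ.ord := hbω.symm
      · exact lt_of_lt_of_le hβq (le_self_add)
      · exact lt_of_lt_of_le (mul_pos hbpos hq0) (le_self_add)
    · -- limit case
      obtain ⟨θ⟩ : Nonempty (Λ ↪ κ.ord.ToType) := by
        rw [← Cardinal.le_def, mk_toType, card_ord]
        exact hΛ
      set code : Λ → Ordinal.{u} := fun l => typein (α := κ.ord.ToType) (· < ·) (θ l) with hcode
      have hcodelt : ∀ l, code l < κ.ord := fun l => typein_lt_self (θ l)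
      have hcodeinj : Function.Injective code :=
        fun l l' h => θ.injective (typein_injective _ h)
      have hdisj : ∀ l l' o, (∃ a, a < e ∧ code l < ω ^ a ∧ o = ω ^ a + code l) →
          (∃ a, a < e ∧ code l' < ω ^ a ∧ o = ω ^ a + code l') → l = l' := by
        rintro l l' o ⟨a, hae, hca, rfl⟩ ⟨a', hae', hca', he'⟩
        obtain ⟨-, h2⟩ := opow_add_eq_opow_add hca hca' he'
        exact hcodeinj h2
      obtain ⟨Dec, hDec1, hDecT⟩ := exists_dec_of_pred _ hdisj
      refine ⟨Dec, fun l β hβ => ?_, fun l o h => ?_⟩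
      swap
      · obtain ⟨a, -, -, rfl⟩ := hDecT l o h
        exact lt_of_lt_of_le (opow_pos a omega0_pos) (le_self_add)
      have hm : max β (code l) < ω ^ e := by
        rw [← he]
        exact max_lt hβ (hcodelt l)
      obtain ⟨a, hae, hma⟩ := ((isNormal_opow one_lt_omega0).lt_iff_exists_lt helim).1 hm
      have hca : code l < ω ^ a := lt_of_le_of_lt (le_max_right _ _) hma
      refine ⟨ω ^ a + code l, ?_, hDec1 l _ ⟨a, hae, hca, rfl⟩, ?_, ?_⟩
      · rw [he]; exact opow_add_lt hca hae
      · exact lt_of_le_of_lt (le_max_left β (code l))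
          (lt_of_lt_of_le hma (le_self_add))
      · exact lt_of_lt_of_le (opow_pos a omega0_pos) (le_self_add)


theorem exists_dec (κ : Cardinal.{u}) (hκ : ℵ₀ ≤ κ) (Λ : Type u) (hΛ : #Λ ≤ κ) :
    ∃ dec : κ.ord.ToType → Option Λ,
      (∀ (l : Λ) (α : κ.ord.ToType), ∃ j, dec j = some l ∧ α < j) ∧
      (∀ (l : Λ) (j : κ.ord.ToType), dec j = some l → ∃ j', j' < j) := by
  obtain ⟨Dec, hDec1, hDec2⟩ := exists_codes κ hκ Λ hΛ
  have hω : ω ≤ κ.ord := by rw [← ord_aleph0]; exact ord_le_ord.2 hκ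
  have h0κ : (0 : Ordinal) < κ.ord := lt_of_lt_of_le omega0_pos hω
  set e := ToType.mk (o := κ.ord) with he
  refine ⟨fun j => Dec ((e.symm j : Iio κ.ord) : Ordinal), fun l α => ?_, fun l j hj => ?_⟩
  · obtain ⟨o, ho, hDo, hβo, -⟩ := hDec1 l ((e.symm α : Iio κ.ord) : Ordinal) (e.symm α).2
    refine ⟨e ⟨o, ho⟩, ?_, ?_⟩
    · show Dec ((e.symm (e ⟨o, ho⟩) : Iio κ.ord) : Ordinal) = some l
      rw [e.symm_apply_apply]
      exact hDo
    · have h1 : e.symm α < e.symm (e ⟨o, ho⟩) := by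
        rw [e.symm_apply_apply]
        exact Subtype.coe_lt_coe.1 (by simpa using hβo)
      exact (OrderIso.lt_iff_lt e.symm).1 h1
  · have h0 : (0 : Ordinal) < ((e.symm j : Iio κ.ord) : Ordinal) := hDec2 l _ hj
    refine ⟨e ⟨0, h0κ⟩, ?_⟩
    have h1 : e.symm (e ⟨0, h0κ⟩) < e.symm j := by
      rw [e.symm_apply_apply]
      exact Subtype.coe_lt_coe.1 (by simpa using h0)
    exact (OrderIso.lt_iff_lt e.symm).1 h1

theorem bounded_of_small (κ : Cardinal.{u}) {μ : Cardinal.{u}} (hμcf : μ ≤ κ.ord.cof)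
    (S : Set κ.ord.ToType) (hS : #S < μ) : ∃ ub, ∀ s ∈ S, s < ub := by
  by_contra hne
  push_neg at hne
  have hc : IsCofinal S := fun a => by
    obtain ⟨s, hs, h⟩ := hne a
    exact ⟨s, hs, h⟩
  have h := Order.cof_le hc
  rw [cof_toType] at h
  exact absurd (hS.trans_le hμcf) (not_lt.2 h)


section Core

variable {X I M : Type u} [LinearOrder I]

abbrev Lab (I M : Type u) : Type u := M ⊕ (M × (Finset I × Finset (Finset I)))

variable (dec : I → Option (Lab I M)) (x : I → X) (i₀ : I) (β₀ : M)

def Ap (β : M) : Set I :=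
  {j | dec j = some (Sum.inl β) ∨ (β = β₀ ∧ dec j = none ∧ ∃ j', j' < j)}
def Cs : Set I := {j | ∃ w, dec j = some (Sum.inr w)}
def Cp (γ : M) : Set I := {j | ∃ p, dec j = some (Sum.inr (γ, p))}
open Classical in
noncomputable def Fcap (B : Set I) (F : Finset I) : Finset I := F.filter (· ∈ B)
def Ss (B : Set I) : Set I :=
  {j | ∃ γ F 𝔉, dec j = some (Sum.inr (γ, (F, 𝔉))) ∧ Fcap B F ∈ 𝔉}
def tg (α : I) : Set X := insert (x i₀) (x '' Set.Ioi α)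
def dg (β : M) : Set X := insert (x i₀) (x '' (Ap dec β₀ β)ᶜ)
def cg (γ : M) : Set X := insert (x i₀) (x '' (Cp dec γ)ᶜ)
def sg (B : Set I) : Set X := insert (x i₀) (x '' ((Cs dec)ᶜ ∪ Ss dec B))
def gens (𝒜 : Set (Set I)) : Set (Set X) :=
  (Set.range (tg x i₀) ∪ Set.range (dg dec x i₀ β₀) ∪ Set.range (cg dec x i₀)) ∪
    (sg dec x i₀ '' 𝒜)
def phi (𝒜 : Set (Set I)) : Filter X := Filter.generate (gens dec x i₀ β₀ 𝒜)

theorem mem_Fcap {B : Set I} {F : Finset I} {i : I} : i ∈ Fcap B F ↔ i ∈ F ∧ i ∈ B := by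
  classical
  simp [Fcap]
theorem mem_gens_phi {𝒜 : Set (Set I)} {G : Set X} (hG : G ∈ gens dec x i₀ β₀ 𝒜) :
    G ∈ phi dec x i₀ β₀ 𝒜 := by
  rw [phi, Filter.mem_generate_iff]
  exact ⟨{G}, singleton_subset_iff.2 hG, finite_singleton G, by rw [sInter_singleton]⟩
theorem x_i₀_mem_gens {𝒜 : Set (Set I)} {G : Set X} (hG : G ∈ gens dec x i₀ β₀ 𝒜) :
    x i₀ ∈ G := by
  rcases hG with ((⟨α, rfl⟩ | ⟨β, rfl⟩) | ⟨γ, rfl⟩) | ⟨B, -, rfl⟩ <;> exact mem_insert _ _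

theorem x_i₀_mem {𝒜 : Set (Set I)} {s : Set X} (hs : s ∈ phi dec x i₀ β₀ 𝒜) : x i₀ ∈ s := by
  rw [phi, Filter.mem_generate_iff] at hs
  obtain ⟨t, hts, -, hsub⟩ := hs
  exact hsub fun G hG => x_i₀_mem_gens dec x i₀ β₀ (hts hG)

variable (hx : Function.Injective x) (hi₀ : ∀ i, i₀ ≤ i)
variable (hdec1 : ∀ (l : Lab I M) (α : I), ∃ j, dec j = some l ∧ α < j)
variable (hdec2 : ∀ (l : Lab I M) (j : I), dec j = some l → ∃ j', j' < j)

include hi₀ hdec2 in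
theorem lt_of_some {l : Lab I M} {j : I} (h : dec j = some l) : i₀ < j := by
  obtain ⟨j', hj'⟩ := hdec2 l j h
  exact lt_of_le_of_lt (hi₀ j') hj'

include hx in
theorem mem_insert_image {k : I} {S : Set I} :
    x k ∈ insert (x i₀) (x '' S) ↔ k = i₀ ∨ k ∈ S := by
  constructor
  · rintro (h | ⟨m, hm, hmk⟩)
    · exact Or.inl (hx h)
    · exact Or.inr (hx hmk ▸ hm)
  · rintro (rfl | h)
    · exact mem_insert _ _
    · exact subset_insert _ _ ⟨k, h, rfl⟩

theorem witness_mem {𝒜 : Set (Set I)} {Q : Set (Set X)} (hQ : Q ⊆ gens dec x i₀ β₀ 𝒜) {j : I}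
    (h1 : ∀ α, tg x i₀ α ∈ Q → α < j)
    (h2 : ∀ β, dg dec x i₀ β₀ β ∈ Q → j ∉ Ap dec β₀ β)
    (h3 : ∀ γ, cg dec x i₀ γ ∈ Q → j ∉ Cp dec γ)
    (h4 : ∀ B ∈ 𝒜, sg dec x i₀ B ∈ Q → x j ∈ sg dec x i₀ B) :
    ∀ G ∈ Q, x j ∈ G := by
  intro G hG
  rcases hQ hG with ((⟨α, rfl⟩ | ⟨β, rfl⟩) | ⟨γ, rfl⟩) | ⟨B, hB, rfl⟩
  · exact subset_insert _ _ ⟨j, h1 α hG, rfl⟩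
  · exact subset_insert _ _ ⟨j, h2 β hG, rfl⟩
  · exact subset_insert _ _ ⟨j, h3 γ hG, rfl⟩
  · exact h4 B hB hG

-- NEW MATERIAL BELOW

include hx hi₀ in
theorem tg_inj : Function.Injective (tg x i₀) := by
  have key : ∀ α α' : I, α < α' → tg x i₀ α ≠ tg x i₀ α' := by
    intro α α' hlt h
    have h1 : x α' ∈ tg x i₀ α := subset_insert _ _ ⟨α', hlt, rfl⟩
    rw [h, tg] at h1
    rcases (mem_insert_image x i₀ hx).1 h1 with rfl | h2
    · exact absurd (lt_of_le_of_lt (hi₀ α) hlt) (lt_irrefl _)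
    · exact absurd h2 (lt_irrefl α')
  intro α α' h
  rcases lt_trichotomy α α' with hlt | heq | hgt
  · exact absurd h (key _ _ hlt)
  · exact heq
  · exact absurd h.symm (key _ _ hgt)

include hx hi₀ hdec1 hdec2 in
theorem dg_inj : Function.Injective (dg dec x i₀ β₀) := by
  intro β β' h
  by_contra hne
  obtain ⟨j, hj, -⟩ := hdec1 (Sum.inl β) i₀
  have hjAp : j ∈ Ap dec β₀ β := Or.inl hj
  have hji₀ : j ≠ i₀ := (lt_of_some dec i₀ hi₀ hdec2 hj).ne'
  have h1 : x j ∈ dg dec x i₀ β₀ β' := by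
    rw [dg, mem_insert_image x i₀ hx]
    refine Or.inr fun hAp => ?_
    rcases hAp with h2 | ⟨-, h2, -⟩
    · rw [hj] at h2
      exact hne (Sum.inl.inj (Option.some.inj h2))
    · rw [hj] at h2; exact absurd h2 (by simp)
  rw [← h, dg, mem_insert_image x i₀ hx] at h1
  rcases h1 with h1 | h1
  · exact hji₀ h1
  · exact h1 hjAp

include hx hi₀ hdec1 hdec2 in
theorem cg_inj : Function.Injective (cg dec x i₀) := by
  intro γ γ' h
  by_contra hne
  obtain ⟨j, hj, -⟩ := hdec1 (Sum.inr (γ, (∅, ∅))) i₀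
  have hjCp : j ∈ Cp dec γ := ⟨_, hj⟩
  have hji₀ : j ≠ i₀ := (lt_of_some dec i₀ hi₀ hdec2 hj).ne'
  have h1 : x j ∈ cg dec x i₀ γ' := by
    rw [cg, mem_insert_image x i₀ hx]
    refine Or.inr fun hCp => ?_
    obtain ⟨p, h2⟩ := hCp
    rw [hj] at h2
    exact hne (congrArg Prod.fst (Sum.inr.inj (Option.some.inj h2)))
  rw [← h, cg, mem_insert_image x i₀ hx] at h1
  rcases h1 with h1 | h1
  · exact hji₀ h1
  · exact h1 hjCp

/-- The small family witnessing `ψ ≤ μ`. -/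
def starFam : Set (Set X) := Set.range (dg dec x i₀ β₀) ∪ Set.range (cg dec x i₀)

theorem starFam_sub (𝒜 : Set (Set I)) : starFam dec x i₀ β₀ ⊆ (phi dec x i₀ β₀ 𝒜).sets := by
  rintro G (⟨β, rfl⟩ | ⟨γ, rfl⟩)
  · exact mem_gens_phi dec x i₀ β₀ (Or.inl (Or.inl (Or.inr ⟨β, rfl⟩)))
  · exact mem_gens_phi dec x i₀ β₀ (Or.inl (Or.inr ⟨γ, rfl⟩))

include hx hi₀ in
theorem starFam_inter : ⋂₀ starFam dec x i₀ β₀ = {x i₀} := by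
  apply Set.eq_of_subset_of_subset
  · intro y hy
    rw [mem_sInter] at hy
    have hy0 : y ∈ dg dec x i₀ β₀ β₀ := hy _ (Or.inl ⟨β₀, rfl⟩)
    rcases hy0 with h | ⟨j, hjmem, rfl⟩
    · exact h
    · by_cases hji₀ : j = i₀
      · subst hji₀; exact rfl
      · exfalso
        have hAp : ∀ β, j ∉ Ap dec β₀ β := by
          intro β hβ
          have := hy _ (Or.inl ⟨β, rfl⟩)
          rcases (mem_insert_image x i₀ hx).1 this with h | h
          · exact hji₀ h
          · exact h hβ
        have hCp : ∀ γ, j ∉ Cp dec γ := by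
          intro γ hγ
          have := hy _ (Or.inr ⟨γ, rfl⟩)
          rcases (mem_insert_image x i₀ hx).1 this with h | h
          · exact hji₀ h
          · exact h hγ
        rcases hdecj : dec j with - | l
        · refine hAp β₀ (Or.inr ⟨rfl, hdecj, ⟨i₀, ?_⟩⟩)
          exact lt_of_le_of_ne (hi₀ j) (Ne.symm hji₀)
        · rcases l with β | ⟨γ, p⟩
          · exact hAp β (Or.inl hdecj)
          · exact hCp γ ⟨p, hdecj⟩
  · intro y hy
    rw [mem_singleton_iff] at hy
    subst hy
    rw [mem_sInter]
    rintro G (⟨β, rfl⟩ | ⟨γ, rfl⟩) <;> exact mem_insert _ _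

variable (μ : Cardinal.{u})

theorem starFam_card (hM : #M = μ) (hμ : ℵ₀ ≤ μ) : #(starFam dec x i₀ β₀) ≤ μ := by
  refine le_trans (mk_union_le _ _) ?_
  have h1 : #(Set.range (dg dec x i₀ β₀)) ≤ μ := hM ▸ mk_range_le
  have h2 : #(Set.range (cg dec x i₀)) ≤ μ := hM ▸ mk_range_le
  calc #(Set.range (dg dec x i₀ β₀)) + #(Set.range (cg dec x i₀)) ≤ μ + μ := add_le_add h1 h2
    _ = μ := add_eq_self hμ

include hx hi₀ in
theorem inter_phi (𝒜 : Set (Set I)) : ⋂₀ (phi dec x i₀ β₀ 𝒜).sets = {x i₀} := by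
  apply Set.eq_of_subset_of_subset
  · refine le_trans (sInter_subset_sInter (starFam_sub dec x i₀ β₀ 𝒜)) ?_
    rw [starFam_inter dec x i₀ β₀ hx hi₀]
  · intro y hy
    rw [mem_singleton_iff] at hy
    subst hy
    rw [mem_sInter]
    exact fun s hs => x_i₀_mem dec x i₀ β₀ hs

variable {μ : Cardinal.{u}}

include hx hi₀ hdec1 hdec2 in
theorem low_bound (hM : #M = μ) (hμ : ℵ₀ ≤ μ)
    (hbdd : ∀ S : Set I, #S < μ → ∃ ub, ∀ s ∈ S, s < ub)
    (𝒜 : Set (Set I)) (𝓕 : Set (Set X)) (h𝓕 : 𝓕 ⊆ (phi dec x i₀ β₀ 𝒜).sets)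
    (hint : ⋂₀ 𝓕 = {x i₀}) : μ ≤ #𝓕 := by
  by_contra hlt
  push_neg at hlt
  have hch : ∀ F : ↥𝓕, ∃ t : Set (Set X),
      t ⊆ gens dec x i₀ β₀ 𝒜 ∧ t.Finite ∧ ⋂₀ t ⊆ (F : Set X) := by
    intro F
    have hF := h𝓕 F.2
    rw [Filter.mem_sets, phi, Filter.mem_generate_iff] at hF
    obtain ⟨t, ht1, ht2, ht3⟩ := hF
    exact ⟨t, ht1, ht2, ht3⟩
  choose t ht1 ht2 ht3 using hch
  set Q : Set (Set X) := ⋃ F : ↥𝓕, t F with hQdef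
  have hQg : Q ⊆ gens dec x i₀ β₀ 𝒜 := iUnion_subset ht1
  have hQcard : #Q < μ := by
    rcases lt_or_ge #𝓕 ℵ₀ with hfin | hinf
    · have : Finite ↥𝓕 := lt_aleph0_iff_finite.1 hfin
      have hQfin : Q.Finite := Set.finite_iUnion ht2
      exact lt_of_lt_of_le hQfin.lt_aleph0 hμ
    · have hne : Nonempty ↥𝓕 := by
        rw [← mk_ne_zero_iff]
        exact ne_of_gt (lt_of_lt_of_le aleph0_pos hinf)
      have h1 : #Q ≤ #↥𝓕 * ℵ₀ := by
        refine le_trans (Cardinal.mk_iUnion_le _) ?_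
        exact mul_le_mul' le_rfl (ciSup_le' fun F => ((ht2 F).lt_aleph0).le)
      rw [mul_eq_max hinf le_rfl, max_eq_left hinf] at h1
      exact lt_of_le_of_lt h1 hlt
  set Sα : Set I := {α | tg x i₀ α ∈ Q} with hSαdef
  set Sβ : Set M := {β | dg dec x i₀ β₀ β ∈ Q} with hSβdef
  have hSα : #Sα < μ := by
    refine lt_of_le_of_lt (mk_le_of_injective
      (f := fun a : ↥Sα => (⟨tg x i₀ a.1, a.2⟩ : ↥Q)) ?_) hQcard
    intro a a' h
    exact Subtype.ext (tg_inj x i₀ hx hi₀ (congrArg Subtype.val h))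
  have hSβ : #Sβ < μ := by
    refine lt_of_le_of_lt (mk_le_of_injective
      (f := fun a : ↥Sβ => (⟨dg dec x i₀ β₀ a.1, a.2⟩ : ↥Q)) ?_) hQcard
    intro a a' h
    exact Subtype.ext (dg_inj dec x i₀ β₀ hx hi₀ hdec1 hdec2 (congrArg Subtype.val h))
  obtain ⟨ub, hub⟩ := hbdd Sα hSα
  obtain ⟨γs, hγs⟩ : ∃ γ : M, γ ∉ Sβ := by
    by_contra hall
    push_neg at hall
    have huniv : Sβ = Set.univ := eq_univ_of_forall hall
    rw [huniv, mk_univ, hM] at hSβ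
    exact lt_irrefl μ hSβ
  obtain ⟨j, hjdec, hjub⟩ := hdec1 (Sum.inl γs) ub
  have hwit : ∀ G ∈ Q, x j ∈ G := by
    refine witness_mem dec x i₀ β₀ hQg ?_ ?_ ?_ ?_
    · intro α hα
      exact lt_trans (hub α hα) hjub
    · intro β hβ hAp
      rcases hAp with h2 | ⟨-, h2, -⟩
      · rw [hjdec] at h2
        obtain rfl := Sum.inl.inj (Option.some.inj h2)
        exact hγs hβ
      · rw [hjdec] at h2
        exact absurd h2 (by simp)
    · intro γ hγ hCp
      obtain ⟨p, h2⟩ := hCp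
      rw [hjdec] at h2
      simp at h2
    · intro B hB hsg
      refine subset_insert _ _ ⟨j, Or.inl fun hCs => ?_, rfl⟩
      obtain ⟨w, h2⟩ := hCs
      rw [hjdec] at h2
      simp at h2
  have hjF : x j ∈ ⋂₀ 𝓕 := by
    rw [mem_sInter]
    intro F hF
    refine ht3 ⟨F, hF⟩ ?_
    rw [mem_sInter]
    intro G hG
    exact hwit G (mem_iUnion.2 ⟨⟨F, hF⟩, hG⟩)
  rw [hint, mem_singleton_iff] at hjF
  exact (lt_of_some dec i₀ hi₀ hdec2 hjdec).ne' (hx hjF)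

include hx hi₀ hdec1 hdec2 in
theorem psi_eq (hM : #M = μ) (hμ : ℵ₀ ≤ μ)
    (hbdd : ∀ S : Set I, #S < μ → ∃ ub, ∀ s ∈ S, s < ub) (𝒜 : Set (Set I)) :
    sInf {c : Cardinal.{u} | ∃ 𝓕 : Set (Set X),
      𝓕 ⊆ (phi dec x i₀ β₀ 𝒜).sets ∧ ⋂₀ 𝓕 = ⋂₀ (phi dec x i₀ β₀ 𝒜).sets ∧ #𝓕 = c} = μ := by
  have hiphi := inter_phi dec x i₀ β₀ hx hi₀ 𝒜
  have hsint := starFam_inter dec x i₀ β₀ hx hi₀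
  have hstar_ge : μ ≤ #(starFam dec x i₀ β₀) :=
    low_bound dec x i₀ β₀ hx hi₀ hdec1 hdec2 hM hμ hbdd 𝒜 _ (starFam_sub dec x i₀ β₀ 𝒜) hsint
  have hstar_eq : #(starFam dec x i₀ β₀) = μ :=
    le_antisymm (starFam_card dec x i₀ β₀ μ hM hμ) hstar_ge
  have hmem : μ ∈ {c : Cardinal.{u} | ∃ 𝓕 : Set (Set X),
      𝓕 ⊆ (phi dec x i₀ β₀ 𝒜).sets ∧ ⋂₀ 𝓕 = ⋂₀ (phi dec x i₀ β₀ 𝒜).sets ∧ #𝓕 = c} :=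
    ⟨starFam dec x i₀ β₀, starFam_sub dec x i₀ β₀ 𝒜, by rw [hiphi, hsint], hstar_eq⟩
  apply le_antisymm
  · exact csInf_le' hmem
  · refine le_csInf ⟨μ, hmem⟩ ?_
    rintro c ⟨𝓕, hsub, hi, rfl⟩
    rw [hiphi] at hi
    exact low_bound dec x i₀ β₀ hx hi₀ hdec1 hdec2 hM hμ hbdd 𝒜 𝓕 hsub hi

theorem phi_le (𝒜 : Set (Set I)) :
    phi dec x i₀ β₀ 𝒜 ≤
      Filter.generate {S : Set X | ∃ α : I, S = insert (x i₀) (x '' Set.Ioi α)} := by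
  rw [Filter.le_generate_iff]
  rintro S ⟨α, rfl⟩
  exact mem_gens_phi dec x i₀ β₀ (Or.inl (Or.inl (Or.inl ⟨α, rfl⟩)))

include hx hi₀ hdec1 hdec2 in
theorem sg_not_mem (hM : #M = μ) (hμ : ℵ₀ ≤ μ)
    (hbdd : ∀ S : Set I, #S < μ → ∃ ub, ∀ s ∈ S, s < ub)
    {𝒜 : Set (Set I)} {B : Set I} (hB : B ∉ 𝒜) :
    sg dec x i₀ B ∉ phi dec x i₀ β₀ 𝒜 := by
  classical
  intro hmem
  rw [phi, Filter.mem_generate_iff] at hmem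
  obtain ⟨t, htg, htfin, htsub⟩ := hmem
  set Sα : Set I := {α | tg x i₀ α ∈ t} with hSαdef
  have hSα : #Sα < μ := by
    refine lt_of_lt_of_le ?_ hμ
    refine lt_of_le_of_lt (mk_le_of_injective
      (f := fun a : ↥Sα => (⟨tg x i₀ a.1, a.2⟩ : ↥t)) ?_) htfin.lt_aleph0
    intro a a' h
    exact Subtype.ext (tg_inj x i₀ hx hi₀ (congrArg Subtype.val h))
  obtain ⟨ub, hub⟩ := hbdd Sα hSα
  set Sγ : Set M := {γ | cg dec x i₀ γ ∈ t} with hSγdef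
  have hSγ : #Sγ < μ := by
    refine lt_of_lt_of_le ?_ hμ
    refine lt_of_le_of_lt (mk_le_of_injective
      (f := fun a : ↥Sγ => (⟨cg dec x i₀ a.1, a.2⟩ : ↥t)) ?_) htfin.lt_aleph0
    intro a a' h
    exact Subtype.ext (cg_inj dec x i₀ hx hi₀ hdec1 hdec2 (congrArg Subtype.val h))
  obtain ⟨γs, hγs⟩ : ∃ γ : M, γ ∉ Sγ := by
    by_contra hall
    push_neg at hall
    have huniv : Sγ = Set.univ := eq_univ_of_forall hall
    rw [huniv, mk_univ, hM] at hSγ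
    exact lt_irrefl μ hSγ
  set rep : Set X → Set I :=
    fun G => if h : ∃ B' ∈ 𝒜, sg dec x i₀ B' = G then h.choose else ∅ with hrepdef
  have hrep : ∀ G, (∃ B' ∈ 𝒜, sg dec x i₀ B' = G) →
      rep G ∈ 𝒜 ∧ sg dec x i₀ (rep G) = G := by
    intro G h
    show (if h : ∃ B' ∈ 𝒜, sg dec x i₀ B' = G then h.choose else ∅) ∈ 𝒜 ∧
      sg dec x i₀ (if h : ∃ B' ∈ 𝒜, sg dec x i₀ B' = G then h.choose else ∅) = G
    rw [dif_pos h]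
    exact h.choose_spec
  set d : Set X → I :=
    fun G => if h : ∃ i, ¬(i ∈ B ↔ i ∈ rep G) then h.choose else i₀ with hddef
  have hd : ∀ G, rep G ≠ B → ¬(d G ∈ B ↔ d G ∈ rep G) := by
    intro G hne
    have h : ∃ i, ¬(i ∈ B ↔ i ∈ rep G) := by
      by_contra hc
      push_neg at hc
      exact hne (Set.ext fun i => hc i).symm
    show ¬((if h : ∃ i, ¬(i ∈ B ↔ i ∈ rep G) then h.choose else i₀) ∈ B ↔
      (if h : ∃ i, ¬(i ∈ B ↔ i ∈ rep G) then h.choose else i₀) ∈ rep G)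
    rw [dif_pos h]
    exact h.choose_spec
  set TS : Finset (Set X) :=
    htfin.toFinset.filter (fun G => ∃ B' ∈ 𝒜, sg dec x i₀ B' = G) with hTSdef
  set F : Finset I := TS.image d with hFdef
  set 𝔉 : Finset (Finset I) := TS.image (fun G => Fcap (rep G) F) with h𝔉def
  obtain ⟨j, hjdec, hjub⟩ := hdec1 (Sum.inr (γs, (F, 𝔉))) ub
  have hwit : ∀ G ∈ t, x j ∈ G := by
    refine witness_mem dec x i₀ β₀ htg ?_ ?_ ?_ ?_
    · intro α hα
      exact lt_trans (hub α hα) hjub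
    · intro β hβ hAp
      rcases hAp with h2 | ⟨-, h2, -⟩
      · rw [hjdec] at h2; simp at h2
      · rw [hjdec] at h2; simp at h2
    · intro γ hγ hCp
      obtain ⟨p, h2⟩ := hCp
      rw [hjdec] at h2
      have h3 := Sum.inr.inj (Option.some.inj h2)
      have hγγ : γs = γ := congrArg Prod.fst h3
      exact hγs (hγγ ▸ hγ)
    · intro B' hB' hsgB'
      have hGTS : sg dec x i₀ B' ∈ TS := by
        rw [hTSdef, Finset.mem_filter]
        exact ⟨htfin.mem_toFinset.2 hsgB', ⟨B', hB', rfl⟩⟩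
      obtain ⟨hrepA, hrepeq⟩ := hrep _ ⟨B', hB', rfl⟩
      have hFc𝔉 : Fcap (rep (sg dec x i₀ B')) F ∈ 𝔉 := by
        rw [h𝔉def]
        exact Finset.mem_image_of_mem _ hGTS
      have hjS : j ∈ Ss dec (rep (sg dec x i₀ B')) := ⟨γs, F, 𝔉, hjdec, hFc𝔉⟩
      have hxj : x j ∈ sg dec x i₀ (rep (sg dec x i₀ B')) :=
        subset_insert _ _ ⟨j, Or.inr hjS, rfl⟩
      rwa [hrepeq] at hxj
  have hj : x j ∈ sg dec x i₀ B := htsub (by rw [mem_sInter]; exact hwit)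
  rcases (mem_insert_image x i₀ hx).1 hj with h1 | h1
  · exact (lt_of_some dec i₀ hi₀ hdec2 hjdec).ne' h1
  rcases h1 with h1 | h1
  · exact h1 ⟨_, hjdec⟩
  · obtain ⟨γ', F', 𝔉', hdec', hFcap⟩ := h1
    rw [hjdec] at hdec'
    have h3 := Sum.inr.inj (Option.some.inj hdec')
    have hF' : F' = F := (congrArg (fun z => z.2.1) h3).symm
    have h𝔉' : 𝔉' = 𝔉 := (congrArg (fun z => z.2.2) h3).symm
    rw [hF', h𝔉', h𝔉def] at hFcap
    obtain ⟨G, hGTS, hGeq⟩ := Finset.mem_image.1 hFcap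
    have hGex : ∃ B' ∈ 𝒜, sg dec x i₀ B' = G := by
      have := hGTS
      rw [hTSdef, Finset.mem_filter] at this
      exact this.2
    have hrepG := (hrep G hGex).1
    have hrepne : rep G ≠ B := fun h => hB (h ▸ hrepG)
    have hdG : d G ∈ F := by
      rw [hFdef]
      exact Finset.mem_image_of_mem _ hGTS
    have hdiff := hd G hrepne
    have h6 : d G ∈ Fcap (rep G) F ↔ d G ∈ Fcap B F := by rw [hGeq]
    rw [mem_Fcap, mem_Fcap] at h6
    apply hdiff
    constructor
    · intro hdB
      exact (h6.2 ⟨hdG, hdB⟩).2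
    · intro hdR
      exact (h6.1 ⟨hdG, hdR⟩).2

include hx hi₀ hdec1 hdec2 in
theorem phi_inj (hM : #M = μ) (hμ : ℵ₀ ≤ μ)
    (hbdd : ∀ S : Set I, #S < μ → ∃ ub, ∀ s ∈ S, s < ub) :
    Function.Injective (phi dec x i₀ β₀ (X := X)) := by
  have key : ∀ 𝒜 𝒜' : Set (Set I), phi dec x i₀ β₀ 𝒜 = phi dec x i₀ β₀ 𝒜' → 𝒜 ⊆ 𝒜' := by
    intro 𝒜 𝒜' h B hBmem
    by_contra hB'
    refine sg_not_mem dec x i₀ β₀ hx hi₀ hdec1 hdec2 hM hμ hbdd hB' ?_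
    rw [← h]
    exact mem_gens_phi dec x i₀ β₀ (Or.inr ⟨B, hBmem, rfl⟩)
  intro 𝒜 𝒜' h
  exact Set.Subset.antisymm (key _ _ h) (key _ _ h.symm)

end Core


end CardFiltersPseudo

open CardFiltersPseudo

/-- Let `κ` be an infinite cardinal, `X` a set, and `(x_α)_{α<κ}` an injective transfinite
sequence in `X` (with least index `i₀`).  Let `φ₀` be the filter on `X` generated by the
sets `{x_{i₀}} ∪ {x_β : α < β < κ}` for `α < κ`.  Then for every infinite cardinal
`μ ≤ cf(κ)`, the set of filters `φ` on `X` with `φ ⊇ φ₀`, `⋂ φ = {x_{i₀}}` and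
pseudocharacter `ψ(φ) = μ` has cardinality exactly `2^(2^κ)`. -/
theorem card_filters_with_pseudocharacter {X : Type u} (κ : Cardinal.{u}) (hκ : ℵ₀ ≤ κ)
    (x : κ.ord.ToType → X) (hinj : Function.Injective x)
    (i₀ : κ.ord.ToType) (hi₀ : ∀ i, i₀ ≤ i)
    (μ : Cardinal.{u}) (hμ : ℵ₀ ≤ μ) (hμcf : μ ≤ κ.ord.cof) :
    #{φ : Filter X |
        φ ≤ Filter.generate {S : Set X | ∃ α : κ.ord.ToType, S = insert (x i₀) (x '' Set.Ioi α)} ∧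
        ⋂₀ φ.sets = {x i₀} ∧
        sInf {c : Cardinal.{u} | ∃ 𝓕 : Set (Set X),
          𝓕 ⊆ φ.sets ∧ ⋂₀ 𝓕 = ⋂₀ φ.sets ∧ #𝓕 = c} = μ} =
      (2 : Cardinal.{u}) ^ ((2 : Cardinal.{u}) ^ κ) := by
  classical
  have hIcard : #κ.ord.ToType = κ := by rw [mk_toType, card_ord]
  have hMcard : #μ.ord.ToType = μ := by rw [mk_toType, card_ord]
  haveI hInf : Infinite κ.ord.ToType := Cardinal.infinite_iff.2 (by rw [hIcard]; exact hκ)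
  haveI hMne : Nonempty μ.ord.ToType := by
    rw [nonempty_toType_iff]
    have h1 : ω ≤ μ.ord := by rw [← ord_aleph0]; exact ord_le_ord.2 hμ
    exact (lt_of_lt_of_le omega0_pos h1).ne'
  have hμκ : μ ≤ κ := le_trans hμcf (cof_ord_le κ)
  have hΛ : #(Lab κ.ord.ToType μ.ord.ToType) ≤ κ := by
    have h1 : #(Finset κ.ord.ToType) = κ := by rw [mk_finset_of_infinite, hIcard]
    have h2 : #(Finset (Finset κ.ord.ToType)) = κ := by rw [mk_finset_of_infinite, h1]
    have h3 : #(Lab κ.ord.ToType μ.ord.ToType) = μ + μ * (κ * κ) := by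
      show #(μ.ord.ToType ⊕ (μ.ord.ToType ×
        (Finset κ.ord.ToType × Finset (Finset κ.ord.ToType)))) = _
      rw [mk_sum, mk_prod, mk_prod]
      simp only [Cardinal.lift_id]
      rw [hMcard, h1, h2]
    rw [h3, mul_eq_self hκ, mul_eq_max hμ hκ, max_eq_right hμκ, add_eq_max hμ, max_eq_right hμκ]
  obtain ⟨dec, hdec1, hdec2⟩ := exists_dec κ hκ (Lab κ.ord.ToType μ.ord.ToType) hΛ
  set β₀ : μ.ord.ToType := Classical.arbitrary μ.ord.ToType with hβ₀def
  have hbdd : ∀ S : Set κ.ord.ToType, #S < μ → ∃ ub, ∀ s ∈ S, s < ub := by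
    intro S hS
    exact bounded_of_small κ hμcf S hS
  set T : Set (Filter X) := {φ : Filter X |
        φ ≤ Filter.generate {S : Set X | ∃ α : κ.ord.ToType, S = insert (x i₀) (x '' Set.Ioi α)} ∧
        ⋂₀ φ.sets = {x i₀} ∧
        sInf {c : Cardinal.{u} | ∃ 𝓕 : Set (Set X),
          𝓕 ⊆ φ.sets ∧ ⋂₀ 𝓕 = ⋂₀ φ.sets ∧ #𝓕 = c} = μ} with hTdef
  apply le_antisymm
  · -- upper bound via traces on a fixed generator
    set V₀ : Set X := insert (x i₀) (x '' Set.Ioi i₀) with hV₀def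
    have hV₀mem : ∀ φ : ↥T, V₀ ∈ (φ : Filter X) := by
      intro φ
      have hle := φ.2.1
      rw [Filter.le_generate_iff] at hle
      exact hle ⟨i₀, rfl⟩
    set g : ↥T → Set (Set ↥V₀) :=
      fun φ => (fun s : Set X => (Subtype.val ⁻¹' s : Set ↥V₀)) '' (φ : Filter X).sets with hgdef
    have hginj : Function.Injective g := by
      have key : ∀ ψ ψ' : ↥T, g ψ = g ψ' → (ψ : Filter X) ≤ (ψ' : Filter X) := by
        intro ψ ψ' heq s hs
        have h1 : (Subtype.val ⁻¹' s : Set ↥V₀) ∈ g ψ := by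
          rw [heq, hgdef]
          exact ⟨s, hs, rfl⟩
        obtain ⟨s', hs', hpre⟩ := h1
        have h2 : V₀ ∩ s' = V₀ ∩ s := by
          rw [← Subtype.image_preimage_coe V₀ s', ← Subtype.image_preimage_coe V₀ s]
          exact congrArg _ hpre
        have h3 : V₀ ∩ s' ∈ (ψ : Filter X) := Filter.inter_mem (hV₀mem ψ) hs'
        rw [h2] at h3
        exact Filter.mem_of_superset h3 inter_subset_right
      intro φ φ' hgeq
      exact Subtype.ext (le_antisymm (key _ _ hgeq) (key _ _ hgeq.symm))
    have hV₀card : #V₀ ≤ κ := by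
      have h1 : V₀ ⊆ insert (x i₀) (Set.range x) := by
        apply insert_subset_insert
        rintro y ⟨j, -, rfl⟩
        exact ⟨j, rfl⟩
      refine le_trans (mk_le_mk_of_subset h1) ?_
      refine le_trans mk_insert_le ?_
      have h2 : #(Set.range x) ≤ κ := le_trans mk_range_le (le_of_eq hIcard)
      calc #(Set.range x) + 1 ≤ κ + κ := add_le_add h2 (one_le_aleph0.trans hκ)
        _ = κ := add_eq_self hκ
    calc #T ≤ #(Set (Set ↥V₀)) := mk_le_of_injective hginj
      _ = 2 ^ ((2 : Cardinal.{u}) ^ #V₀) := by rw [mk_set, mk_set]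
      _ ≤ 2 ^ ((2 : Cardinal.{u}) ^ κ) := by
          apply power_le_power_left two_ne_zero
          exact power_le_power_left two_ne_zero hV₀card
  · -- lower bound via the filters `phi 𝒜`
    have hmem : ∀ 𝒜 : Set (Set κ.ord.ToType), phi dec x i₀ β₀ 𝒜 ∈ T := by
      intro 𝒜
      refine ⟨phi_le dec x i₀ β₀ 𝒜, inter_phi dec x i₀ β₀ hinj hi₀ 𝒜, ?_⟩
      exact psi_eq dec x i₀ β₀ hinj hi₀ hdec1 hdec2 hMcard hμ hbdd 𝒜
    have hfinj : Function.Injective (fun 𝒜 : Set (Set κ.ord.ToType) =>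
        (⟨phi dec x i₀ β₀ 𝒜, hmem 𝒜⟩ : ↥T)) := by
      intro 𝒜 𝒜' h
      exact phi_inj dec x i₀ β₀ hinj hi₀ hdec1 hdec2 hMcard hμ hbdd (congrArg Subtype.val h)
    calc (2 : Cardinal.{u}) ^ ((2 : Cardinal.{u}) ^ κ)
        = #(Set (Set κ.ord.ToType)) := by rw [mk_set, mk_set, hIcard]
      _ ≤ #T := mk_le_of_injective hfinj
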